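/- If (1+ε)λ lies in the capacity region, i.e., there exists μ ∈ co(Γ) with μ_{nm} ≥ (1+ε)Σ_{f:(n,m)∈L(f)} λ_f for every link (n,m), then for every queue state Q, Σ_f Q^f_{b(f)} λ_f ≤ (1/(1+ε)) Σ_{(n,m)} μ_{nm} max_{f:(n,m)∈L(f)} (Q^f_n − Q^f_m)⁺. -/

import Mathlib

open Finset

lemma tele_aux {Node : Type*} (g : Node → ℝ) :
    ∀ (l : List Node) (h : l ≠ []),
      ((l.zip l.tail).map (fun p => g p.1 - g p.2)).sum
        = g (l.head h) - g (l.getLast h)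
  | [], h => absurd rfl h
  | [a], _ => by simp
  | a :: b :: t, _ => by
      have ih := tele_aux g (b :: t) (by simp)
      simp only [List.tail_cons, List.zip_cons_cons, List.map_cons, List.sum_cons,
        List.head_cons, List.getLast_cons_cons] at ih ⊢
      rw [ih]; ring

lemma zip_nodup_aux {Node : Type*} :
    ∀ (l : List Node), l.Nodup → (l.zip l.tail).Nodup
  | [], _ => by simp
  | [a], _ => by simp
  | a :: b :: t, h => by
      have ih := zip_nodup_aux (b :: t) h.of_cons
      simp only [List.tail_cons, List.zip_cons_cons, List.nodup_cons]
      refine ⟨fun hm => ?_, ih⟩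
      have := (List.of_mem_zip hm).1
      exact (List.nodup_cons.1 h).1 this

/-- If `(1+ε)λ` lies in the capacity region (there is `μ` with
`μ_{nm} ≥ (1+ε)·∑_{f:(n,m)∈L(f)} λ_f` on every link), then for every queue
state `Q` (nonnegative, zero at each flow's destination),
`∑_f Q^f_{b(f)} λ_f ≤ (1/(1+ε)) ∑_{(n,m)} μ_{nm} max_{f:(n,m)∈L(f)} (Q^f_n − Q^f_m)⁺`. -/
theorem stmt_8 {F Node : Type*} [Fintype F] [DecidableEq F]
    [Fintype Node] [DecidableEq Node]
    (route : F → List Node) (hne : ∀ f, route f ≠ [])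
    (hnodup : ∀ f, (route f).Nodup)
    (lam : F → ℝ) (hlam : ∀ f, 0 ≤ lam f) (ε : ℝ) (hε : 0 < ε)
    (Q : F → Node → ℝ) (hQ : ∀ f n, 0 ≤ Q f n)
    (hdest : ∀ f, Q f ((route f).getLast (hne f)) = 0)
    (μ : Node × Node → ℝ)
    (hcap : ∀ nm : Node × Node,
      (1 + ε) * ∑ f ∈ univ.filter (fun f => nm ∈ (route f).zip (route f).tail),
        lam f ≤ μ nm) :
    ∑ f, Q f ((route f).head (hne f)) * lam f ≤
      (1 / (1 + ε)) * ∑ nm : Node × Node, μ nm *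
        (univ.filter (fun f => nm ∈ (route f).zip (route f).tail)).fold max 0
          (fun f => max (Q f nm.1 - Q f nm.2) 0) := by
  have hpos : (0:ℝ) < 1 + ε := by linarith
  set S : F → Finset (Node × Node) := fun f => ((route f).zip (route f).tail).toFinset
    with hS
  set M : Node × Node → ℝ := fun nm =>
    (univ.filter (fun f => nm ∈ (route f).zip (route f).tail)).fold max 0
      (fun f => max (Q f nm.1 - Q f nm.2) 0) with hM
  have hMnonneg : ∀ nm, 0 ≤ M nm := fun nm =>
    (Finset.le_fold_max _).2 (Or.inl le_rfl)
  have hMge : ∀ nm f, f ∈ univ.filter (fun f => nm ∈ (route f).zip (route f).tail) →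
      max (Q f nm.1 - Q f nm.2) 0 ≤ M nm := fun nm f hf =>
    (Finset.le_fold_max _).2 (Or.inr ⟨f, hf, le_rfl⟩)
  calc ∑ f, Q f ((route f).head (hne f)) * lam f
      = ∑ f, (∑ p ∈ S f, (Q f p.1 - Q f p.2)) * lam f := by
        refine Finset.sum_congr rfl fun f _ => ?_
        have h1 := tele_aux (Q f) (route f) (hne f)
        have h2 : (∑ p ∈ S f, (Q f p.1 - Q f p.2))
            = (((route f).zip (route f).tail).map (fun p => Q f p.1 - Q f p.2)).sum := by
          rw [hS]
          exact List.sum_toFinset _ (zip_nodup_aux _ (hnodup f))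
        rw [h2, h1, hdest f, sub_zero]
    _ = ∑ f, ∑ p ∈ S f, (Q f p.1 - Q f p.2) * lam f :=
        Finset.sum_congr rfl fun f _ => Finset.sum_mul _ _ _
    _ ≤ ∑ f, ∑ p ∈ S f, max (Q f p.1 - Q f p.2) 0 * lam f := by
        refine Finset.sum_le_sum fun f _ => Finset.sum_le_sum fun p _ => ?_
        exact mul_le_mul_of_nonneg_right (le_max_left _ _) (hlam f)
    _ = ∑ f, ∑ nm : Node × Node,
          if nm ∈ S f then max (Q f nm.1 - Q f nm.2) 0 * lam f else 0 := by
        refine Finset.sum_congr rfl fun f _ => ?_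
        rw [Finset.sum_ite_mem, Finset.univ_inter]
    _ = ∑ nm : Node × Node, ∑ f,
          if nm ∈ S f then max (Q f nm.1 - Q f nm.2) 0 * lam f else 0 :=
        Finset.sum_comm
    _ = ∑ nm : Node × Node,
          ∑ f ∈ univ.filter (fun f => nm ∈ (route f).zip (route f).tail),
            max (Q f nm.1 - Q f nm.2) 0 * lam f := by
        refine Finset.sum_congr rfl fun nm _ => ?_
        rw [Finset.sum_filter]
        refine Finset.sum_congr rfl fun f _ => ?_
        simp [hS, List.mem_toFinset]
    _ ≤ ∑ nm : Node × Node,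
          ∑ f ∈ univ.filter (fun f => nm ∈ (route f).zip (route f).tail),
            M nm * lam f := by
        refine Finset.sum_le_sum fun nm _ => Finset.sum_le_sum fun f hf => ?_
        exact mul_le_mul_of_nonneg_right (hMge nm f hf) (hlam f)
    _ = ∑ nm : Node × Node, M nm *
          ∑ f ∈ univ.filter (fun f => nm ∈ (route f).zip (route f).tail), lam f := by
        simp [Finset.mul_sum]
    _ ≤ ∑ nm : Node × Node, M nm * (μ nm / (1 + ε)) := by
        refine Finset.sum_le_sum fun nm _ => ?_
        refine mul_le_mul_of_nonneg_left ?_ (hMnonneg nm)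
        rw [le_div_iff₀ hpos, mul_comm]
        exact hcap nm
    _ = (1 / (1 + ε)) * ∑ nm : Node × Node, μ nm * M nm := by
        rw [Finset.mul_sum]
        refine Finset.sum_congr rfl fun nm _ => ?_
        field_simp
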